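/- Let Y be a real normed space and K a nonempty closed convex subset of Y. Then the interior of the recession cone R_K is nonempty if and only if either K = Y or 0 ∉ the weak-star closed convex hull of S_{Y*} ∩ (−bar(K)). -/

import Mathlib

open Topology Filter Set

noncomputable section

section Defs

variable {E : Type*} [AddCommGroup E] [Module ℝ E] [TopologicalSpace E]

/-- The canonical map from the topological dual of `E` to the weak-star dual. -/
def toWD (φ : E →L[ℝ] ℝ) : WeakDual ℝ E := φ

/-- The weak-star closed convex hull of a set of continuous linear functionals. -/
def wcch (B : Set (E →L[ℝ] ℝ)) : Set (WeakDual ℝ E) :=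
  closure (convexHull ℝ (toWD '' B))

/-- `f` is Gateaux differentiable at `x` with Gateaux-differential `f'`. -/
def HasGateauxAt (f : E → ℝ) (f' : E →L[ℝ] ℝ) (x : E) : Prop :=
  ∀ v : E, Tendsto (fun t : ℝ => (f (x + t • v) - f x - t * f' v) / t) (𝓝[>] 0) (𝓝 0)

/-- The family `C` is equi-Gateaux differentiable at `x`, with differentials given by `D`. -/
def EquiGateauxAt (C : Set (E → ℝ)) (D : (E → ℝ) → E →L[ℝ] ℝ) (x : E) : Prop :=
  (∀ φ ∈ C, HasGateauxAt φ (D φ) x) ∧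
  ∀ v : E, ∀ ε : ℝ, 0 < ε → ∃ δ : ℝ, 0 < δ ∧ ∀ t : ℝ, 0 < t → t < δ →
    ∀ φ ∈ C, |(φ (x + t • v) - φ x - t * (D φ) v) / t| ≤ ε

/-- The family `C` is equi-lower semicontinuous at `x`. -/
def EquiLscAt (C : Set (E → ℝ)) (x : E) : Prop :=
  ∀ ε : ℝ, 0 < ε → ∃ O ∈ 𝓝 x, ∀ y ∈ O, ∀ φ ∈ C, φ y - φ x > -ε

/-- `[C]^× = {x ∈ E : φ(x) ≥ 0 for all φ ∈ C}`. -/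
def polarSet (C : Set (E → ℝ)) : Set E := {x | ∀ φ ∈ C, 0 ≤ φ x}

/-- The multiplier set `T_C(x̂)`. -/
def multSet (C : Set (E → ℝ)) (D : (E → ℝ) → E →L[ℝ] ℝ) (x : E) : Set (WeakDual ℝ E) :=
  ⋂ n ∈ {n : ℕ | 1 ≤ n}, wcch (D '' {φ | φ ∈ C ∧ φ x ∈ Icc (0:ℝ) (1/(n:ℝ))})

/-- `F` is weak-admissible at `x ∈ F`, determined by `C` (with differentials `D`). -/
def WeakAdmissibleAt (F : Set E) (C : Set (E → ℝ)) (D : (E → ℝ) → E →L[ℝ] ℝ) (x : E) : Prop :=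
  x ∈ F ∧ C.Nonempty ∧ F = polarSet C ∧ EquiGateauxAt C D x ∧
    ({φ | φ ∈ C ∧ φ x ≠ 0} = ∅ ∨ EquiLscAt {φ | φ ∈ C ∧ φ x ≠ 0} x) ∧
    IsCompact (wcch (D '' C))

end Defs

section NormedDefs

variable {Y : Type*} [NormedAddCommGroup Y] [NormedSpace ℝ Y]

/-- `A` is admissible at `x ∈ A`, determined by `C` (with differentials `D`). -/
def AdmissibleAt (A : Set Y) (C : Set (Y → ℝ)) (D : (Y → ℝ) → Y →L[ℝ] ℝ) (x : Y) : Prop :=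
  x ∈ A ∧ C.Nonempty ∧ A = polarSet C ∧ EquiGateauxAt C D x ∧
    (∃ r : NNReal, ∃ ε : ℝ, 0 < ε ∧ ∀ φ ∈ C, LipschitzOnWith r φ (Metric.ball x ε)) ∧
    toWD (0 : Y →L[ℝ] ℝ) ∉ wcch (D '' C)

/-- The recession cone of a set. -/
def recCone (K : Set Y) : Set Y := {v | ∀ l : ℝ, 0 < l → ∀ x ∈ K, x + l • v ∈ K}

/-- The barrier cone of `K`: functionals bounded above on `K`. -/
def barCone (K : Set Y) : Set (Y →L[ℝ] ℝ) := {φ | BddAbove (φ '' K)}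

/-- The dual positive cone `A*`. -/
def posDualCone (A : Set Y) : Set (Y →L[ℝ] ℝ) := {φ | ∀ y ∈ A, 0 ≤ φ y}

end NormedDefs


section Aux
variable {Y : Type*} [NormedAddCommGroup Y] [NormedSpace ℝ Y]

lemma aux_barCone_nonpos {K : Set Y} (hne : K.Nonempty) {ψ : Y →L[ℝ] ℝ}
    (hψ : ψ ∈ barCone K) {z : Y} (hz : z ∈ recCone K) : ψ z ≤ 0 := by
  obtain ⟨M, hM⟩ := hψ
  obtain ⟨x0, hx0⟩ := hne
  by_contra h
  push_neg at h
  have h1 : ψ x0 ≤ M := hM ⟨x0, hx0, rfl⟩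
  set l : ℝ := (M - ψ x0 + 1) / ψ z with hldef
  have hlpos : 0 < l := div_pos (by linarith) h
  have h2 : ψ (x0 + l • z) ≤ M := hM ⟨_, hz l hlpos x0 hx0, rfl⟩
  have h3 : ψ (x0 + l • z) = ψ x0 + l * ψ z := by
    rw [map_add, map_smul]; rfl
  have h4 : l * ψ z = M - ψ x0 + 1 := div_mul_cancel₀ _ (ne_of_gt h)
  linarith [h3 ▸ h2]

lemma aux_mem_recCone {K : Set Y} (hcl : IsClosed K) (hconv : Convex ℝ K)
    {w : Y} (hw : ∀ φ : Y →L[ℝ] ℝ, ‖φ‖ = 1 → -φ ∈ barCone K → 0 ≤ φ w) :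
    w ∈ recCone K := by
  intro l hl x hx
  by_contra hz
  obtain ⟨f, u, hfK, hfz⟩ := geometric_hahn_banach_closed_point hconv hcl hz
  have hfx : f x < u := hfK x hx
  have hsum : f (x + l • w) = f x + l * f w := by rw [map_add, map_smul]; rfl
  have hfw : 0 < f w := by
    rw [hsum] at hfz; nlinarith
  have hf0 : f ≠ 0 := by
    intro h; rw [h] at hfw; simp at hfw
  have hnf : 0 < ‖f‖ := norm_pos_iff.mpr hf0
  set φ : Y →L[ℝ] ℝ := -((‖f‖⁻¹) • f) with hφdef
  have hφapp : ∀ y, φ y = -(‖f‖⁻¹ * f y) := by intro y; simp [hφdef]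
  have hφn : ‖φ‖ = 1 := by
    rw [hφdef, norm_neg]
    rw [norm_smul ((‖f‖)⁻¹) f, norm_inv, norm_norm]
    exact inv_mul_cancel₀ (ne_of_gt hnf)
  have hφb : -φ ∈ barCone K := by
    refine ⟨‖f‖⁻¹ * u, ?_⟩
    rintro _ ⟨y, hy, rfl⟩
    have h5 : (-φ) y = ‖f‖⁻¹ * f y := by rw [ContinuousLinearMap.neg_apply, hφapp]; ring
    rw [h5]
    exact mul_le_mul_of_nonneg_left (hfK y hy).le (by positivity)
  have h6 := hw φ hφn hφb
  rw [hφapp] at h6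
  nlinarith [mul_pos (inv_pos.mpr hnf) hfw]

end Aux

/-- For a nonempty closed convex subset `K` of a real normed space `Y`,
the recession cone `R_K` has nonempty interior iff either `K = Y` or `0` is not in the
weak-star closed convex hull of `S_{Y*} ∩ (−bar(K))`. -/
theorem interior_recession_cone_nonempty_iff
    {Y : Type*} [NormedAddCommGroup Y] [NormedSpace ℝ Y]
    (K : Set Y) (hne : K.Nonempty) (hcl : IsClosed K) (hconv : Convex ℝ K) :
    (interior (recCone K)).Nonempty ↔
      (K = Set.univ ∨
        toWD (0 : Y →L[ℝ] ℝ) ∉ wcch {φ : Y →L[ℝ] ℝ | ‖φ‖ = 1 ∧ -φ ∈ barCone K}) := by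
  classical
  set B : Set (Y →L[ℝ] ℝ) := {φ : Y →L[ℝ] ℝ | ‖φ‖ = 1 ∧ -φ ∈ barCone K} with hBdef
  constructor
  · rintro ⟨v, hv⟩
    right
    intro h0mem
    obtain ⟨r, hr, hball⟩ := Metric.isOpen_iff.mp isOpen_interior v hv
    have hball' : Metric.ball v r ⊆ recCone K := hball.trans interior_subset
    -- key: every φ ∈ B satisfies r/4 ≤ φ v
    have key : ∀ φ ∈ B, r / 4 ≤ φ v := by
      rintro φ ⟨hn, hb⟩
      have h12 : (1:ℝ)/2 < ‖φ‖ := by rw [hn]; norm_num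
      obtain ⟨x, hx1, hx2⟩ := φ.exists_lt_apply_of_lt_opNorm h12
      rw [Real.norm_eq_abs] at hx2
      set u' : Y := if 0 ≤ φ x then x else -x with hu'def
      have hu'n : ‖u'‖ < 1 := by
        by_cases h : 0 ≤ φ x <;> simp [hu'def, h, norm_neg, hx1]
      have hu' : 1/2 < φ u' := by
        by_cases h : 0 ≤ φ x
        · rw [hu'def, if_pos h]; rwa [abs_of_nonneg h] at hx2
        · rw [hu'def, if_neg h, map_neg]
          push_neg at h
          rwa [abs_of_neg h] at hx2
      have hwmem : v - (r/2) • u' ∈ recCone K := by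
        apply hball'
        rw [Metric.mem_ball, dist_eq_norm]
        have : v - (r/2) • u' - v = -((r/2) • u') := by abel
        rw [this, norm_neg, norm_smul, Real.norm_eq_abs, abs_of_pos (by linarith)]
        nlinarith
      have hneg := aux_barCone_nonpos hne hb hwmem
      rw [ContinuousLinearMap.neg_apply] at hneg
      have h7 : φ (v - (r/2) • u') = φ v - (r/2) * φ u' := by
        rw [map_sub, map_smul]; rfl
      nlinarith [h7 ▸ (neg_nonpos.mp hneg)]
    -- the halfspace
    set S : Set (WeakDual ℝ Y) := {ψ : WeakDual ℝ Y | r/4 ≤ ψ v} with hSdef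
    have hSconv : Convex ℝ S := by
      intro ψ hψ χ hχ a b ha hb hab
      have happ : (a • ψ + b • χ) v = a * ψ v + b * χ v := rfl
      show r/4 ≤ (a • ψ + b • χ) v
      rw [happ]
      have hψ' : r/4 ≤ ψ v := hψ
      have hχ' : r/4 ≤ χ v := hχ
      nlinarith [mul_le_mul_of_nonneg_left hψ' ha, mul_le_mul_of_nonneg_left hχ' hb]
    have hSclosed : IsClosed S :=
      IsClosed.preimage (WeakDual.eval_continuous v) isClosed_Ici
    have hsub : wcch B ⊆ S := by
      apply closure_minimal (convexHull_min ?_ hSconv) hSclosed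
      rintro _ ⟨φ, hφ, rfl⟩
      exact key φ hφ
    have := hsub h0mem
    simp only [hSdef, mem_setOf_eq] at this
    have h0v : (toWD (0 : Y →L[ℝ] ℝ)) v = 0 := rfl
    rw [h0v] at this
    linarith
  · rintro (rfl | h0)
    · refine ⟨0, ?_⟩
      have : recCone (univ : Set Y) = univ := by
        ext w; simp [recCone]
      rw [this, interior_univ]
      trivial
    · -- hard direction
      rcases eq_empty_or_nonempty B with hBe | hBne
      · refine ⟨0, ?_⟩
        have : recCone K = univ := by
          apply eq_univ_of_forall
          intro w
          apply aux_mem_recCone hcl hconv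
          intro φ hφn hφb
          exact absurd (show φ ∈ B from ⟨hφn, hφb⟩) (by rw [hBe]; exact notMem_empty φ)
        rw [this, interior_univ]; trivial
      -- extract a finite neighborhood
      have hinj : Function.Injective ⇑(topDualPairing ℝ Y) := ContinuousLinearMap.coe_injective
      have hnhds := (WeakBilin.isEmbedding hinj).toIsInducing.nhds_eq_comap
        (0 : WeakDual ℝ Y)
      have hmem : (wcch B)ᶜ ∈ 𝓝 (0 : WeakDual ℝ Y) :=
        (isOpen_compl_iff.mpr isClosed_closure).mem_nhds h0
      rw [show 𝓝 (0 : WeakDual ℝ Y) = _ from hnhds] at hmem; replace hmem := Filter.mem_comap.mp hmem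
      obtain ⟨S, hS, hsubS⟩ := hmem
      have h0fun : (fun y => topDualPairing ℝ Y (0 : WeakDual ℝ Y) y) = (fun _ : Y => (0:ℝ)) := by
        funext y; rfl
      rw [h0fun, nhds_pi] at hS
      obtain ⟨I, hIfin, t, ht, hpisub⟩ := Filter.mem_pi.mp hS
      have htball : ∀ y, ∃ ε : ℝ, 0 < ε ∧ Metric.ball (0:ℝ) ε ⊆ t y := by
        intro y
        obtain ⟨ε, hε, hbs⟩ := Metric.mem_nhds_iff.mp (ht y)
        exact ⟨ε, hε, hbs⟩
      choose ε hεpos hεsub using htball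
      -- every ψ in the convex hull escapes the neighborhood
      have hesc : ∀ ψ ∈ convexHull ℝ (toWD '' B), ∃ y ∈ I, ε y ≤ |ψ y| := by
        intro ψ hψ
        have hψw : ψ ∈ wcch B := subset_closure hψ
        have : ψ ∉ (fun (χ : WeakDual ℝ Y) y => topDualPairing ℝ Y χ y) ⁻¹' S := by
          intro hc
          exact (hsubS hc) hψw
        have hnotpi : (fun y => topDualPairing ℝ Y ψ y) ∉ I.pi t := fun hc => this (hpisub hc)
        rw [Set.mem_pi] at hnotpi
        push_neg at hnotpi
        obtain ⟨y, hyI, hyt⟩ := hnotpi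
        refine ⟨y, hyI, ?_⟩
        by_contra hlt
        push_neg at hlt
        exact hyt (hεsub y (by rw [Metric.mem_ball, Real.dist_eq, sub_zero]; exact hlt))
      -- I is nonempty
      obtain ⟨φ0, hφ0⟩ := hBne
      have hInonempty : I.Nonempty := by
        rcases I.eq_empty_or_nonempty with hIe | h
        · obtain ⟨y, hy, _⟩ := hesc (toWD φ0)
            (subset_convexHull ℝ _ (mem_image_of_mem _ hφ0))
          rw [hIe] at hy; exact absurd hy (notMem_empty y)
        · exact h
      set J : Finset Y := hIfin.toFinset with hJdef
      have hJne : J.Nonempty := by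
        obtain ⟨y, hy⟩ := hInonempty
        exact ⟨y, hIfin.mem_toFinset.mpr hy⟩
      set ε0 : ℝ := J.inf' hJne ε with hε0def
      have hε0pos : 0 < ε0 := by
        rw [hε0def, Finset.lt_inf'_iff]
        intro y _; exact hεpos y
      -- finite dimensional image
      set Φ : WeakDual ℝ Y → (↥J → ℝ) := fun ψ i => ψ (i : Y) with hΦdef
      set A : Set (↥J → ℝ) := Φ '' (convexHull ℝ (toWD '' B)) with hAdef
      have hAbd : ∀ a ∈ A, ε0 ≤ ‖a‖ := by
        rintro _ ⟨ψ, hψ, rfl⟩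
        obtain ⟨y, hyI, hy⟩ := hesc ψ hψ
        have hyJ : y ∈ J := hIfin.mem_toFinset.mpr hyI
        calc ε0 ≤ ε y := Finset.inf'_le ε hyJ
          _ ≤ |ψ y| := hy
          _ = ‖Φ ψ ⟨y, hyJ⟩‖ := by rw [Real.norm_eq_abs]
          _ ≤ ‖Φ ψ‖ := norm_le_pi_norm _ _
      have h0A : (0 : ↥J → ℝ) ∉ closure A := by
        intro hc
        have hcls : closure A ⊆ {a : ↥J → ℝ | ε0 ≤ ‖a‖} :=
          closure_minimal hAbd (isClosed_le continuous_const continuous_norm)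
        have := hcls hc
        simp only [mem_setOf_eq, norm_zero] at this
        linarith
      have hΦlin : IsLinearMap ℝ Φ := by
        constructor
        · intro ψ χ; funext i; rfl
        · intro c ψ; funext i; rfl
      have hAconv : Convex ℝ A := (convex_convexHull ℝ _).is_linear_image hΦlin
      obtain ⟨f, u, hfA, hf0⟩ := geometric_hahn_banach_closed_point
        hAconv.closure isClosed_closure h0A
      have hu0 : u < 0 := by
        have : f 0 = 0 := map_zero f
        rwa [this] at hf0
      -- represent f by a vector in Y
      set v' : Y := ∑ i : ↥J, (f fun j => if i = j then 1 else 0) • (i : Y) with hv'def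
      have hrep : ∀ φ : Y →L[ℝ] ℝ, φ v' = f (Φ (toWD φ)) := by
        intro φ
        rw [hv'def, map_sum]
        have hfl : f (Φ (toWD φ)) =
            ∑ i : ↥J, (Φ (toWD φ)) i • f (fun j => if i = j then 1 else 0) :=
          LinearMap.pi_apply_eq_sum_univ (f : (↥J → ℝ) →ₗ[ℝ] ℝ) (Φ (toWD φ))
        rw [hfl]
        apply Finset.sum_congr rfl
        intro i _
        rw [map_smul]
        simp [hΦdef, toWD, smul_eq_mul, mul_comm]; exact Or.inl rfl
      have hBlt : ∀ φ ∈ B, φ v' < u := by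
        intro φ hφ
        rw [hrep φ]
        exact hfA _ (subset_closure ⟨toWD φ,
          subset_convexHull ℝ _ (mem_image_of_mem _ hφ), rfl⟩)
      -- the ball around -v' is in the recession cone
      refine ⟨-v', ?_⟩
      rw [mem_interior]
      refine ⟨Metric.ball (-v') (-u), ?_, Metric.isOpen_ball, Metric.mem_ball_self (by linarith)⟩
      intro w hw
      apply aux_mem_recCone hcl hconv
      intro φ hφn hφb
      have hφB : φ ∈ B := ⟨hφn, hφb⟩
      have h8 : φ v' < u := hBlt φ hφB
      have h9 : ‖w - -v'‖ < -u := by rwa [Metric.mem_ball, dist_eq_norm] at hw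
      have h10 : |φ (w - -v')| ≤ ‖w - -v'‖ := by
        calc |φ (w - -v')| = ‖φ (w - -v')‖ := (Real.norm_eq_abs _).symm
          _ ≤ ‖φ‖ * ‖w - -v'‖ := φ.le_opNorm _
          _ = ‖w - -v'‖ := by rw [hφn, one_mul]
      have h11 : φ w = φ (-v') + φ (w - -v') := by rw [← map_add]; congr 1; abel
      have h12 : φ (-v') = -φ v' := map_neg φ v'
      have := abs_le.mp h10
      linarith
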